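/- Let H be a Hilbert space L²(μ) for a probability measure μ, and let L²(μ)_c be the closed subspace spanned by a uniformly closed, conjugation-closed algebra 𝓕 of bounded functions containing the constants. Let f ↦ f^(c) denote orthogonal projection onto L²(μ)_c. Then: (i) if f ≥ 0 μ-a.e. then f^(c) ≥ 0 μ-a.e.; (ii) if 0 ≤ f ≤ 1 μ-a.e. then 0 ≤ f^(c) ≤ 1 μ-a.e.; (iii) ∫ f^(c) dμ = ∫ f dμ; (iv) for any measurable set A, μ(A \ {x : 1_A^(c)(x) > 0}) = 0. -/

import Mathlib

open MeasureTheory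

-- product of two L² functions is integrable
lemma aux_int_mul {X : Type*} [MeasurableSpace X] {μ : Measure X} {u v : X → ℝ}
    (hu : MemLp u 2 μ) (hv : MemLp v 2 μ) :
    Integrable (fun x => u x * v x) μ := by
  have hi : Integrable (fun x => (u x ^ 2 + v x ^ 2) / 2) μ :=
    (hu.integrable_sq.add hv.integrable_sq).div_const 2
  refine hi.mono' (hu.1.mul hv.1) (Filter.Eventually.of_forall fun x => ?_)
  rw [Real.norm_eq_abs]
  rcases abs_cases (u x * v x) with ⟨h1, _⟩ | ⟨h1, _⟩ <;> rw [h1] <;>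
    nlinarith [sq_nonneg (u x - v x), sq_nonneg (u x + v x)]

-- polynomial membership
lemma aux_poly_mem {X : Type*} (F : Set (X → ℝ))
    (hFconst : ∀ c : ℝ, (fun _ => c) ∈ F)
    (hFadd : ∀ f ∈ F, ∀ g ∈ F, f + g ∈ F)
    (hFmul : ∀ f ∈ F, ∀ g ∈ F, f * g ∈ F)
    {h : X → ℝ} (hh : h ∈ F) (p : Polynomial ℝ) :
    (fun x => p.eval (h x)) ∈ F := by
  induction p using Polynomial.induction_on with
  | C a => simpa using hFconst a
  | add p q hp hq =>
      have := hFadd _ hp _ hq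
      simp only [Polynomial.eval_add]; exact this
  | monomial n a ih =>
      have := hFmul _ ih _ hh
      have heq : (fun x => Polynomial.eval (h x) (Polynomial.C a * Polynomial.X ^ (n + 1)))
          = (fun x => Polynomial.eval (h x) (Polynomial.C a * Polynomial.X ^ n)) * h := by
        funext x; simp [pow_succ, mul_assoc]
      rw [heq]; exact this

lemma aux_max_mem {X : Type*} (F : Set (X → ℝ))
    (hFbdd : ∀ f ∈ F, ∃ C : ℝ, ∀ x, |f x| ≤ C)
    (hFconst : ∀ c : ℝ, (fun _ => c) ∈ F)
    (hFadd : ∀ f ∈ F, ∀ g ∈ F, f + g ∈ F)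
    (hFmul : ∀ f ∈ F, ∀ g ∈ F, f * g ∈ F)
    (hFclosed : ∀ f : X → ℝ, (∀ ε > 0, ∃ g ∈ F, ∀ x, |f x - g x| ≤ ε) → f ∈ F)
    {h : X → ℝ} (hh : h ∈ F) :
    (fun x => max (h x) 0) ∈ F := by
  apply hFclosed
  intro ε hε
  obtain ⟨C, hC⟩ := hFbdd h hh
  obtain ⟨p, hp⟩ := exists_polynomial_near_of_continuousOn (-|C|) |C| (fun t => max t 0)
    ((continuous_id.max continuous_const).continuousOn) ε hε
  refine ⟨fun x => p.eval (h x), aux_poly_mem F hFconst hFadd hFmul hh p, fun x => ?_⟩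
  have hx : h x ∈ Set.Icc (-|C|) |C| := by
    have := hC x
    have habs : |h x| ≤ |C| := this.trans (le_abs_self C)
    exact ⟨neg_le_of_abs_le habs, le_of_abs_le habs⟩
  have := (hp (h x) hx).le
  rw [abs_sub_comm] at this
  exact this

lemma aux_clamp_mem {X : Type*} (F : Set (X → ℝ))
    (hFbdd : ∀ f ∈ F, ∃ C : ℝ, ∀ x, |f x| ≤ C)
    (hFconst : ∀ c : ℝ, (fun _ => c) ∈ F)
    (hFadd : ∀ f ∈ F, ∀ g ∈ F, f + g ∈ F)
    (hFmul : ∀ f ∈ F, ∀ g ∈ F, f * g ∈ F)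
    (hFsmul : ∀ (c : ℝ), ∀ f ∈ F, c • f ∈ F)
    (hFclosed : ∀ f : X → ℝ, (∀ ε > 0, ∃ g ∈ F, ∀ x, |f x - g x| ≤ ε) → f ∈ F)
    {h : X → ℝ} (hh : h ∈ F) :
    (fun x => min (max (h x) 0) 1) ∈ F := by
  have hmax := aux_max_mem F hFbdd hFconst hFadd hFmul hFclosed hh
  set v : X → ℝ := (fun _ => (1:ℝ)) + (-1 : ℝ) • (fun x => max (h x) 0) with hvdef
  have hv : v ∈ F := hFadd _ (hFconst 1) _ (hFsmul (-1) _ hmax)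
  have hw := aux_max_mem F hFbdd hFconst hFadd hFmul hFclosed hv
  set w : X → ℝ := (fun _ => (1:ℝ)) + (-1 : ℝ) • (fun x => max (v x) 0) with hwdef
  have hfin : w ∈ F := hFadd _ (hFconst 1) _ (hFsmul (-1) _ hw)
  have hscalar : ∀ a : ℝ, min (max a 0) 1 = 1 + (-1) * max (1 + (-1) * max a 0) 0 := by
    intro a
    rcases le_total a 0 with ha | ha
    · rw [max_eq_right ha]; norm_num
    · rcases le_total a 1 with h1 | h1
      · rw [max_eq_left ha, min_eq_left h1, max_eq_left (by linarith)]; ring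
      · rw [max_eq_left ha, min_eq_right h1, max_eq_right (by linarith)]; ring
  have heq : (fun x => min (max (h x) 0) 1) = w := by
    funext x
    show min (max (h x) 0) 1 = 1 + (-1) * max (v x) 0
    have hvx : v x = 1 + (-1) * max (h x) 0 := rfl
    rw [hvx]; exact hscalar (h x)
  rw [heq]; exact hfin

lemma aux_F_memL2 {X : Type*} [MeasurableSpace X] (μ : Measure X) [IsFiniteMeasure μ]
    {g : X → ℝ} (hgm : Measurable g) (hgb : ∃ C : ℝ, ∀ x, |g x| ≤ C) :
    MemLp g 2 μ := by
  obtain ⟨C, hC⟩ := hgb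
  exact (memLp_top_of_bound hgm.aestronglyMeasurable C
    (Filter.Eventually.of_forall fun x => by simpa using hC x)).mono_exponent le_top

lemma aux_key {X : Type*} [MeasurableSpace X] (μ : Measure X) [IsFiniteMeasure μ]
    (F : Set (X → ℝ))
    (hFmeas : ∀ f ∈ F, Measurable f)
    (hFbdd : ∀ f ∈ F, ∃ C : ℝ, ∀ x, |f x| ≤ C)
    {u h : X → ℝ} (hu : MemLp u 2 μ) (hh : MemLp h 2 μ)
    (horth : ∀ g ∈ F, ∫ x, u x * g x ∂μ = 0)
    (happ : ∀ ε > 0, ∃ g ∈ F, ∫ x, (h x - g x) ^ 2 ∂μ < ε) :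
    ∫ x, u x * h x ∂μ = 0 := by
  set A : ℝ := ∫ x, u x ^ 2 ∂μ with hA
  have hA0 : 0 ≤ A := integral_nonneg fun x => sq_nonneg _
  by_contra hne
  set ε : ℝ := |∫ x, u x * h x ∂μ| with hε
  have hεpos : 0 < ε := abs_pos.mpr hne
  set t : ℝ := ε / (2 * (A + 1)) with ht
  have htpos : 0 < t := by positivity
  obtain ⟨g, hgF, hgε⟩ := happ (2 * t * ε) (by positivity)
  have hgl2 : MemLp g 2 μ := aux_F_memL2 μ (hFmeas g hgF) (hFbdd g hgF)
  have hint_uh : Integrable (fun x => u x * h x) μ := aux_int_mul hu hh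
  have hint_ug : Integrable (fun x => u x * g x) μ := aux_int_mul hu hgl2
  have hint_uhg : Integrable (fun x => u x * (h x - g x)) μ := aux_int_mul hu (hh.sub hgl2)
  have hsplit : ∫ x, u x * h x ∂μ = ∫ x, u x * (h x - g x) ∂μ := by
    have : ∀ x, u x * (h x - g x) = u x * h x - u x * g x := fun x => by ring
    rw [show (fun x => u x * (h x - g x)) = (fun x => u x * h x - u x * g x) from funext this,
      integral_sub hint_uh hint_ug, horth g hgF, sub_zero]
  -- bound |∫ u (h-g)| ≤ t A + (1/(4t)) ∫ (h-g)²
  have hint_sq : Integrable (fun x => (h x - g x) ^ 2) μ := (hh.sub hgl2).integrable_sq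
  have hint_rhs : Integrable (fun x => t * u x ^ 2 + (1 / (4 * t)) * (h x - g x) ^ 2) μ :=
    (hu.integrable_sq.const_mul t).add (hint_sq.const_mul _)
  have hbound : |∫ x, u x * (h x - g x) ∂μ| ≤ t * A + (1 / (4 * t)) * ∫ x, (h x - g x) ^ 2 ∂μ := by
    calc |∫ x, u x * (h x - g x) ∂μ| ≤ ∫ x, |u x| * |h x - g x| ∂μ := by
          simpa [Real.norm_eq_abs, abs_mul] using
            norm_integral_le_integral_norm (fun x => u x * (h x - g x)) (μ := μ)
      _ ≤ ∫ x, (t * u x ^ 2 + (1 / (4 * t)) * (h x - g x) ^ 2) ∂μ := by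
          refine integral_mono_of_nonneg
            (Filter.Eventually.of_forall fun x => mul_nonneg (abs_nonneg _) (abs_nonneg _))
            hint_rhs (Filter.Eventually.of_forall fun x => ?_)
          dsimp only
          have ht' : (4 * t) ≠ 0 := by positivity
          have h2 : t * |u x| ^ 2 + (1 / (4 * t)) * |h x - g x| ^ 2 - |u x| * |h x - g x|
              = (2 * t * |u x| - |h x - g x|) ^ 2 / (4 * t) := by
            generalize |u x| = a; generalize |h x - g x| = b
            field_simp; ring
          have h3 := div_nonneg (sq_nonneg (2 * t * |u x| - |h x - g x|))
            (by positivity : (0:ℝ) ≤ 4 * t)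
          rw [← h2] at h3
          rw [sq_abs, sq_abs] at h3
          linarith
      _ = t * A + (1 / (4 * t)) * ∫ x, (h x - g x) ^ 2 ∂μ := by
          rw [integral_add (hu.integrable_sq.const_mul t) (hint_sq.const_mul _),
            integral_const_mul, integral_const_mul, hA]
  have hfinal : ε < ε := by
    have h1 : t * A ≤ ε / 2 := by
      rw [ht]
      rw [div_mul_eq_mul_div, div_le_div_iff₀ (by positivity) (by norm_num)]
      nlinarith
    have h2 : (1 / (4 * t)) * ∫ x, (h x - g x) ^ 2 ∂μ < (1 / (4 * t)) * (2 * t * ε) := by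
      apply mul_lt_mul_of_pos_left hgε (by positivity)
    have h3 : (1 / (4 * t)) * (2 * t * ε) = ε / 2 := by field_simp; ring
    calc ε = |∫ x, u x * (h x - g x) ∂μ| := by rw [← hsplit]
      _ ≤ t * A + (1 / (4 * t)) * ∫ x, (h x - g x) ^ 2 ∂μ := hbound
      _ < ε / 2 + (1 / (4 * t)) * (2 * t * ε) := add_lt_add_of_le_of_lt h1 h2
      _ = ε := by rw [h3]; ring
  exact lt_irrefl _ hfinal

lemma aux_pos {X : Type*} [MeasurableSpace X] (μ : Measure X) [IsProbabilityMeasure μ]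
    (F : Set (X → ℝ))
    (hFmeas : ∀ f ∈ F, Measurable f)
    (hFbdd : ∀ f ∈ F, ∃ C : ℝ, ∀ x, |f x| ≤ C)
    (hFconst : ∀ c : ℝ, (fun _ => c) ∈ F)
    (hFadd : ∀ f ∈ F, ∀ g ∈ F, f + g ∈ F)
    (hFmul : ∀ f ∈ F, ∀ g ∈ F, f * g ∈ F)
    (hFclosed : ∀ f : X → ℝ, (∀ ε > 0, ∃ g ∈ F, ∀ x, |f x - g x| ≤ ε) → f ∈ F)
    (f fc : X → ℝ) (hf : MemLp f 2 μ) (hfc : MemLp fc 2 μ)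
    (hfc_mem : ∀ ε > 0, ∃ g ∈ F, ∫ x, (fc x - g x) ^ 2 ∂μ < ε)
    (hproj : ∀ g ∈ F, ∫ x, (f x - fc x) * g x ∂μ = 0)
    (hpos : ∀ᵐ x ∂μ, 0 ≤ f x) :
    ∀ᵐ x ∂μ, 0 ≤ fc x := by
  set P : X → ℝ := fun x => max (fc x) 0 with hPdef
  have hP : MemLp P 2 μ := by
    refine MemLp.of_le hfc (hfc.1.sup aestronglyMeasurable_const)
      (Filter.Eventually.of_forall fun x => ?_)
    show ‖max (fc x) 0‖ ≤ ‖fc x‖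
    rw [Real.norm_eq_abs, Real.norm_eq_abs]
    simpa using abs_max_sub_max_le_abs (fc x) 0 0
  have hPapp : ∀ ε > 0, ∃ g ∈ F, ∫ x, (P x - g x) ^ 2 ∂μ < ε := by
    intro ε hε
    obtain ⟨g, hgF, hgε⟩ := hfc_mem ε hε
    have hgl2 : MemLp g 2 μ := aux_F_memL2 μ (hFmeas g hgF) (hFbdd g hgF)
    refine ⟨fun x => max (g x) 0, aux_max_mem F hFbdd hFconst hFadd hFmul hFclosed hgF, ?_⟩
    refine lt_of_le_of_lt ?_ hgε
    refine integral_mono_of_nonneg (Filter.Eventually.of_forall fun x => sq_nonneg _)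
      (hfc.sub hgl2).integrable_sq (Filter.Eventually.of_forall fun x => ?_)
    show (max (fc x) 0 - max (g x) 0) ^ 2 ≤ (fc x - g x) ^ 2
    have h1 : |max (fc x) 0 - max (g x) 0| ≤ |fc x - g x| := abs_max_sub_max_le_abs _ _ _
    have h2 := pow_le_pow_left₀ (abs_nonneg (max (fc x) 0 - max (g x) 0)) h1 2
    rwa [sq_abs, sq_abs] at h2
  have hu : MemLp (fun x => f x - fc x) 2 μ := hf.sub hfc
  have key1 : ∫ x, (f x - fc x) * fc x ∂μ = 0 :=
    aux_key μ F hFmeas hFbdd hu hfc hproj hfc_mem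
  have key2 : ∫ x, (f x - fc x) * P x ∂μ = 0 :=
    aux_key μ F hFmeas hFbdd hu hP hproj hPapp
  have keyd : ∫ x, (f x - fc x) * (fc x - P x) ∂μ = 0 := by
    have : (fun x => (f x - fc x) * (fc x - P x))
        = fun x => (f x - fc x) * fc x - (f x - fc x) * P x := funext fun x => by ring
    rw [this, integral_sub (aux_int_mul hu hfc) (aux_int_mul hu hP), key1, key2, sub_zero]
  -- expansion : ∫ (f-P)² = ∫ (f-fc)² + ∫ (fc-P)²
  have hexp : ∫ x, (f x - P x) ^ 2 ∂μ
      = ∫ x, (f x - fc x) ^ 2 ∂μ + ∫ x, (fc x - P x) ^ 2 ∂μ := by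
    have e : (fun x => (f x - P x) ^ 2)
        = fun x => ((f x - fc x) ^ 2 + (fc x - P x) ^ 2) + 2 * ((f x - fc x) * (fc x - P x)) :=
      funext fun x => by ring
    have hi1 : Integrable (fun x => (f x - fc x) ^ 2) μ := hu.integrable_sq
    have hi2 : Integrable (fun x => (fc x - P x) ^ 2) μ := (hfc.sub hP).integrable_sq
    have hi12 : Integrable (fun x => (f x - fc x) ^ 2 + (fc x - P x) ^ 2) μ := hi1.add hi2
    have hip : Integrable (fun x => 2 * ((f x - fc x) * (fc x - P x))) μ :=
      (aux_int_mul hu (hfc.sub hP)).const_mul 2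
    rw [e, integral_add hi12 hip, integral_add hi1 hi2, integral_const_mul, keyd]
    ring
  have hle : ∫ x, (f x - P x) ^ 2 ∂μ ≤ ∫ x, (f x - fc x) ^ 2 ∂μ := by
    refine integral_mono_of_nonneg (Filter.Eventually.of_forall fun x => sq_nonneg _)
      hu.integrable_sq (hpos.mono fun x hx => ?_)
    show (f x - max (fc x) 0) ^ 2 ≤ (f x - fc x) ^ 2
    rcases le_total 0 (fc x) with h1 | h1
    · rw [max_eq_left h1]
    · rw [max_eq_right h1]; nlinarith
  have hz : ∫ x, (fc x - P x) ^ 2 ∂μ = 0 := by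
    have h0 : 0 ≤ ∫ x, (fc x - P x) ^ 2 ∂μ := integral_nonneg fun x => sq_nonneg _
    linarith
  have := (integral_eq_zero_iff_of_nonneg_ae
    (Filter.Eventually.of_forall fun x => sq_nonneg ((fc x - P x)))
    (hfc.sub hP).integrable_sq).mp hz
  filter_upwards [this] with x hx
  have : fc x = P x := by
    have : (fc x - P x) ^ 2 = 0 := hx
    nlinarith [sq_nonneg (fc x - P x)]
  rw [this]; exact le_max_right _ _

lemma aux_pow_lip (n : ℕ) (a b : ℝ) (ha0 : 0 ≤ a) (ha1 : a ≤ 1) (hb0 : 0 ≤ b) (hb1 : b ≤ 1) :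
    |a ^ n - b ^ n| ≤ n * |a - b| := by
  induction n with
  | zero => simp
  | succ n ih =>
    have e : a ^ (n + 1) - b ^ (n + 1) = a ^ n * (a - b) + b * (a ^ n - b ^ n) := by ring
    have han : |a ^ n| ≤ 1 := by
      rw [abs_of_nonneg (pow_nonneg ha0 n)]; exact pow_le_one₀ ha0 ha1
    have hbb : |b| ≤ 1 := abs_le.mpr ⟨by linarith, hb1⟩
    calc |a ^ (n + 1) - b ^ (n + 1)| = |a ^ n * (a - b) + b * (a ^ n - b ^ n)| := by rw [e]
      _ ≤ |a ^ n * (a - b)| + |b * (a ^ n - b ^ n)| := abs_add_le _ _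
      _ = |a ^ n| * |a - b| + |b| * |a ^ n - b ^ n| := by rw [abs_mul, abs_mul]
      _ ≤ 1 * |a - b| + 1 * (n * |a - b|) := by
          refine add_le_add (mul_le_mul_of_nonneg_right han (abs_nonneg _)) ?_
          exact mul_le_mul hbb ih (abs_nonneg _) zero_le_one
      _ = (n + 1 : ℕ) * |a - b| := by push_cast; ring

lemma aux_clamp_lip (a b : ℝ) (ha0 : 0 ≤ a) (ha1 : a ≤ 1) :
    |a - min (max b 0) 1| ≤ |a - b| := by
  rcases le_total b 0 with hb | hb
  · rw [max_eq_right hb, min_eq_left zero_le_one, sub_zero, abs_of_nonneg ha0]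
    calc a ≤ a - b := by linarith
      _ ≤ |a - b| := le_abs_self _
  · rcases le_total 1 b with hb1 | hb1
    · rw [max_eq_left (by linarith), min_eq_right hb1, abs_of_nonpos (by linarith)]
      have h1 : -(a - 1) ≤ -(a - b) := by linarith
      exact h1.trans (neg_le_abs _)
    · rw [max_eq_left hb, min_eq_left hb1]


/-- properties of the orthogonal projection `f ↦ f^(c)` of `L²(μ)` onto the
`L²`-closure of a uniformly closed algebra `F` of bounded functions containing the
constants.  `fc` is characterized as the projection of `f`: `fc` lies in the `L²`-closure
of `F` and `f − fc` is orthogonal to `F`. -/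
theorem projection_onto_algebra
    {X : Type*} [MeasurableSpace X] (μ : Measure X) [IsProbabilityMeasure μ]
    (F : Set (X → ℝ))
    (hFmeas : ∀ f ∈ F, Measurable f)
    (hFbdd : ∀ f ∈ F, ∃ C : ℝ, ∀ x, |f x| ≤ C)
    (hFconst : ∀ c : ℝ, (fun _ => c) ∈ F)
    (hFadd : ∀ f ∈ F, ∀ g ∈ F, f + g ∈ F)
    (hFmul : ∀ f ∈ F, ∀ g ∈ F, f * g ∈ F)
    (hFsmul : ∀ (c : ℝ), ∀ f ∈ F, c • f ∈ F)
    (hFclosed : ∀ f : X → ℝ, (∀ ε > 0, ∃ g ∈ F, ∀ x, |f x - g x| ≤ ε) → f ∈ F)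
    (f fc : X → ℝ) (hf : MemLp f 2 μ) (hfc : MemLp fc 2 μ)
    (hfc_mem : ∀ ε > 0, ∃ g ∈ F, ∫ x, (fc x - g x) ^ 2 ∂μ < ε)
    (hproj : ∀ g ∈ F, ∫ x, (f x - fc x) * g x ∂μ = 0) :
    ((∀ᵐ x ∂μ, 0 ≤ f x) → (∀ᵐ x ∂μ, 0 ≤ fc x)) ∧
    ((∀ᵐ x ∂μ, f x ∈ Set.Icc (0 : ℝ) 1) → (∀ᵐ x ∂μ, fc x ∈ Set.Icc (0 : ℝ) 1)) ∧
    (∫ x, fc x ∂μ = ∫ x, f x ∂μ) ∧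
    (∀ A : Set X, MeasurableSet A → f = A.indicator 1 →
      μ (A \ {x | 0 < fc x}) = 0) := by
  have hu : MemLp (fun x => f x - fc x) 2 μ := hf.sub hfc
  have hfint : Integrable f μ := hf.integrable one_le_two
  have hfcint : Integrable fc μ := hfc.integrable one_le_two
  -- part (i)
  have part1 : (∀ᵐ x ∂μ, 0 ≤ f x) → (∀ᵐ x ∂μ, 0 ≤ fc x) := fun hpos =>
    aux_pos μ F hFmeas hFbdd hFconst hFadd hFmul hFclosed f fc hf hfc hfc_mem hproj hpos
  -- the `1 - f` trick for the upper bound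
  have part2 : (∀ᵐ x ∂μ, f x ∈ Set.Icc (0 : ℝ) 1) → (∀ᵐ x ∂μ, fc x ∈ Set.Icc (0 : ℝ) 1) := by
    intro hIcc
    have hlow : ∀ᵐ x ∂μ, 0 ≤ fc x := part1 (hIcc.mono fun x hx => hx.1)
    have hf1 : MemLp (fun x => 1 - f x) 2 μ := (memLp_const 1).sub hf
    have hfc1 : MemLp (fun x => 1 - fc x) 2 μ := (memLp_const 1).sub hfc
    have hfc1_mem : ∀ ε > 0, ∃ g ∈ F, ∫ x, ((1 - fc x) - g x) ^ 2 ∂μ < ε := by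
      intro ε hε
      obtain ⟨g, hgF, hgε⟩ := hfc_mem ε hε
      set g1 : X → ℝ := (fun _ => (1:ℝ)) + (-1 : ℝ) • g with hg1def
      refine ⟨g1, hFadd _ (hFconst 1) _ (hFsmul (-1) g hgF), ?_⟩
      have e : (fun x => ((1 - fc x) - g1 x) ^ 2)
          = fun x => (fc x - g x) ^ 2 := by
        funext x
        show ((1 - fc x) - (1 + (-1) * g x)) ^ 2 = (fc x - g x) ^ 2
        ring
      rw [e]; exact hgε
    have hproj1 : ∀ g ∈ F, ∫ x, ((1 - f x) - (1 - fc x)) * g x ∂μ = 0 := by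
      intro g hgF
      have e : (fun x => ((1 - f x) - (1 - fc x)) * g x)
          = fun x => -((f x - fc x) * g x) := funext fun x => by ring
      rw [e, integral_neg, hproj g hgF, neg_zero]
    have hup := aux_pos μ F hFmeas hFbdd hFconst hFadd hFmul hFclosed
      (fun x => 1 - f x) (fun x => 1 - fc x) hf1 hfc1 hfc1_mem hproj1
      (hIcc.mono fun x hx => by simpa using hx.2)
    filter_upwards [hlow, hup] with x h1 h2
    exact ⟨h1, by linarith⟩
  -- part (iii)
  have part3 : ∫ x, fc x ∂μ = ∫ x, f x ∂μ := by
    have h1 : ∫ x, (f x - fc x) * (1:ℝ) ∂μ = 0 := hproj _ (hFconst 1)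
    simp only [mul_one] at h1
    rw [integral_sub hfint hfcint] at h1
    linarith
  refine ⟨part1, part2, part3, ?_⟩
  -- part (iv)
  intro A hA hfA
  have hIcc : ∀ᵐ x ∂μ, f x ∈ Set.Icc (0:ℝ) 1 := by
    refine Filter.Eventually.of_forall fun x => ?_
    rw [hfA]
    by_cases hx : x ∈ A <;> simp [Set.indicator_of_mem, Set.indicator_of_notMem, hx]
  have h01 : ∀ᵐ x ∂μ, fc x ∈ Set.Icc (0:ℝ) 1 := part2 hIcc
  -- the functions (1 - fc)^n
  have hhn : ∀ n : ℕ, MemLp (fun x => (1 - fc x) ^ n) 2 μ := by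
    intro n
    have hsm : AEStronglyMeasurable (fun x => (1 - fc x) ^ n) μ :=
      (aestronglyMeasurable_const.sub hfc.1).pow n
    refine (memLp_top_of_bound hsm 1 (h01.mono fun x hx => ?_)).mono_exponent le_top
    rw [Real.norm_eq_abs, abs_pow]
    exact pow_le_one₀ (abs_nonneg _) (abs_le.mpr ⟨by linarith [hx.2], by linarith [hx.1]⟩)
  have happn : ∀ n : ℕ, ∀ ε > 0, ∃ g ∈ F, ∫ x, ((1 - fc x) ^ n - g x) ^ 2 ∂μ < ε := by
    intro n ε hε
    have hd : (0:ℝ) < (n:ℝ)^2 + 1 := by positivity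
    obtain ⟨g, hgF, hgε⟩ := hfc_mem (ε / ((n:ℝ)^2 + 1)) (by positivity)
    have hgl2 : MemLp g 2 μ := aux_F_memL2 μ (hFmeas g hgF) (hFbdd g hgF)
    set t : X → ℝ := fun x => min (max (g x) 0) 1 with htdef
    have htF : t ∈ F := aux_clamp_mem F hFbdd hFconst hFadd hFmul hFsmul hFclosed hgF
    set s1 : X → ℝ := (fun _ => (1:ℝ)) + (-1 : ℝ) • t with hs1def
    have hsF : s1 ∈ F := hFadd _ (hFconst 1) _ (hFsmul (-1) t htF)
    have hgnF : (fun x => (1 - t x) ^ n) ∈ F := by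
      have := aux_poly_mem F hFconst hFadd hFmul hsF (Polynomial.X ^ n)
      have e : (fun x => Polynomial.eval (s1 x)
          (Polynomial.X ^ n)) = fun x => (1 - t x) ^ n := by
        funext x
        show Polynomial.eval (1 + (-1) * t x) (Polynomial.X ^ n) = (1 - t x) ^ n
        rw [Polynomial.eval_pow, Polynomial.eval_X]
        ring_nf
      rwa [e] at this
    refine ⟨fun x => (1 - t x) ^ n, hgnF, ?_⟩
    have hbound : ∫ x, ((1 - fc x) ^ n - (1 - t x) ^ n) ^ 2 ∂μ
        ≤ ∫ x, (n:ℝ)^2 * (fc x - g x) ^ 2 ∂μ := by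
      refine integral_mono_of_nonneg (Filter.Eventually.of_forall fun x => sq_nonneg _)
        ((hfc.sub hgl2).integrable_sq.const_mul _) (h01.mono fun x hx => ?_)
      have ht0 : 0 ≤ t x := le_min (le_max_right _ _) zero_le_one
      have ht1 : t x ≤ 1 := min_le_right _ _
      have hlip : |(1 - fc x) ^ n - (1 - t x) ^ n| ≤ (n:ℝ) * |fc x - t x| := by
        have := aux_pow_lip n (1 - fc x) (1 - t x)
          (by linarith [hx.2]) (by linarith [hx.1]) (by linarith) (by linarith)
        calc |(1 - fc x) ^ n - (1 - t x) ^ n| ≤ (n:ℝ) * |(1 - fc x) - (1 - t x)| := this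
          _ = (n:ℝ) * |fc x - t x| := by rw [show (1 - fc x) - (1 - t x) = -(fc x - t x) by ring, abs_neg]
      have hclamp : |fc x - t x| ≤ |fc x - g x| := aux_clamp_lip (fc x) (g x) hx.1 hx.2
      have h2 : |(1 - fc x) ^ n - (1 - t x) ^ n| ≤ (n:ℝ) * |fc x - g x| :=
        hlip.trans (mul_le_mul_of_nonneg_left hclamp (Nat.cast_nonneg n))
      have h3 := pow_le_pow_left₀ (abs_nonneg _) h2 2
      rw [sq_abs] at h3
      calc ((1 - fc x) ^ n - (1 - t x) ^ n) ^ 2 ≤ ((n:ℝ) * |fc x - g x|) ^ 2 := h3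
        _ = (n:ℝ)^2 * (fc x - g x) ^ 2 := by rw [mul_pow, sq_abs]
    have hend : ∫ x, (n:ℝ)^2 * (fc x - g x) ^ 2 ∂μ < ε := by
      rw [integral_const_mul]
      have h4 : (n:ℝ)^2 * ∫ x, (fc x - g x) ^ 2 ∂μ ≤ (n:ℝ)^2 * (ε / ((n:ℝ)^2 + 1)) :=
        mul_le_mul_of_nonneg_left hgε.le (by positivity)
      have h5 : (n:ℝ)^2 * (ε / ((n:ℝ)^2 + 1)) < ε := by
        rw [mul_div_assoc']
        rw [div_lt_iff₀ hd]
        nlinarith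
      linarith
    exact lt_of_le_of_lt hbound hend
  -- key identity for each n
  have hkeyn : ∀ n : ℕ, ∫ x, f x * (1 - fc x) ^ n ∂μ = ∫ x, fc x * (1 - fc x) ^ n ∂μ := by
    intro n
    have h0 : ∫ x, (f x - fc x) * (1 - fc x) ^ n ∂μ = 0 :=
      aux_key μ F hFmeas hFbdd hu (hhn n) hproj (happn n)
    have e : (fun x => (f x - fc x) * (1 - fc x) ^ n)
        = fun x => f x * (1 - fc x) ^ n - fc x * (1 - fc x) ^ n := funext fun x => by ring
    rw [e, integral_sub (aux_int_mul hf (hhn n)) (aux_int_mul hfc (hhn n))] at h0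
    linarith
  -- the integrals tend to zero
  have htend : Filter.Tendsto (fun n => ∫ x, fc x * (1 - fc x) ^ n ∂μ)
      Filter.atTop (nhds 0) := by
    have := tendsto_integral_of_dominated_convergence (μ := μ)
      (F := fun n x => fc x * (1 - fc x) ^ n) (f := fun _ => (0:ℝ)) (bound := fun _ => (1:ℝ))
      (fun n => hfc.1.mul ((aestronglyMeasurable_const.sub hfc.1).pow n))
      (integrable_const 1)
      (fun n => h01.mono fun x hx => by
        rw [Real.norm_eq_abs, abs_mul, abs_pow]
        have h1 : |fc x| ≤ 1 := abs_le.mpr ⟨by linarith [hx.1], hx.2⟩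
        have h2 : |1 - fc x| ^ n ≤ 1 :=
          pow_le_one₀ (abs_nonneg _) (abs_le.mpr ⟨by linarith [hx.2], by linarith [hx.1]⟩)
        show |fc x| * |1 - fc x| ^ n ≤ 1
        nlinarith [abs_nonneg (fc x), pow_nonneg (abs_nonneg (1 - fc x)) n])
      (h01.mono fun x hx => by
        rcases eq_or_lt_of_le hx.1 with h0 | h0
        · simpa [← h0] using tendsto_const_nhds
        · have hp := tendsto_pow_atTop_nhds_zero_of_lt_one
            (by linarith [hx.2] : (0:ℝ) ≤ 1 - fc x) (by linarith : 1 - fc x < 1)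
          simpa using tendsto_const_nhds.mul hp)
    simpa using this
  -- measurable version of fc and the bad set
  obtain ⟨fc', hfc'sm, hfc'eq⟩ := hfc.1
  set S : Set X := A ∩ {x | fc' x ≤ 0} with hSdef
  have hSmeas : MeasurableSet S := hA.inter (measurableSet_le hfc'sm.measurable measurable_const)
  have hSle : ∀ n : ℕ, (μ S).toReal ≤ ∫ x, fc x * (1 - fc x) ^ n ∂μ := by
    intro n
    rw [← hkeyn n, ← measureReal_def, ← integral_indicator_one hSmeas]
    refine integral_mono_of_nonneg (Filter.Eventually.of_forall fun x => ?_)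
      (aux_int_mul hf (hhn n)) ?_
    · by_cases hx : x ∈ S <;> simp [Set.indicator_of_mem, Set.indicator_of_notMem, hx]
    · filter_upwards [h01, hfc'eq] with x hx hx'
      by_cases hxS : x ∈ S
      · have hfc0 : fc x = 0 := le_antisymm (hx' ▸ hxS.2) hx.1
        have hfx : f x = 1 := by
          rw [hfA, Set.indicator_of_mem hxS.1]; rfl
        simp [Set.indicator_of_mem hxS, hfx, hfc0]
      · rw [Set.indicator_of_notMem hxS]
        have hf0 : 0 ≤ f x := by
          rw [hfA]
          by_cases hxa : x ∈ A <;>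
            simp [Set.indicator_of_mem, Set.indicator_of_notMem, hxa]
        exact mul_nonneg hf0 (pow_nonneg (by linarith [hx.2]) n)
  have hS0 : μ S = 0 := by
    have h1 : (μ S).toReal ≤ 0 :=
      ge_of_tendsto htend (Filter.Eventually.of_forall hSle)
    have h2 : (μ S).toReal = 0 := le_antisymm h1 ENNReal.toReal_nonneg
    rcases (ENNReal.toReal_eq_zero_iff _).mp h2 with h | h
    · exact h
    · exact absurd h (measure_ne_top μ S)
  have hbad : μ {x | ¬ fc x = fc' x} = 0 := by
    have := hfc'eq
    rw [Filter.EventuallyEq, ae_iff] at this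
    exact this
  refine measure_mono_null ?_ (measure_union_null hS0 hbad)
  intro x hx
  by_cases he : fc x = fc' x
  · exact Or.inl ⟨hx.1, by simp only [Set.mem_setOf_eq, ← he]; exact not_lt.mp hx.2⟩
  · exact Or.inr he
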